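/- If the half-open interval (a, b] is contained in a countable union of half-open intervals (a_i, b_i], then b − a ≤ Σ_{i=1}^{∞} (b_i − a_i). -/
import Mathlib

open Set

/-- If `(a, b]` is contained in a countable union of half-open intervals
`(aᵢ, bᵢ]`, then `b - a ≤ ∑ᵢ (bᵢ - aᵢ)` (the sum taken in `[0,∞]`). -/
theorem length_le_sum_of_countable_Ioc_cover (a b : ℝ) (hab : a ≤ b)
    (A B : ℕ → ℝ) (hcov : Ioc a b ⊆ ⋃ i, Ioc (A i) (B i)) :
    ENNReal.ofReal (b - a) ≤ ∑' i, ENNReal.ofReal (B i - A i) := by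
  calc ENNReal.ofReal (b - a) = MeasureTheory.volume (Ioc a b) := (Real.volume_Ioc).symm
    _ ≤ MeasureTheory.volume (⋃ i, Ioc (A i) (B i)) := MeasureTheory.measure_mono hcov
    _ ≤ ∑' i, MeasureTheory.volume (Ioc (A i) (B i)) := MeasureTheory.measure_iUnion_le _
    _ = ∑' i, ENNReal.ofReal (B i - A i) := by simp [Real.volume_Ioc]
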